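/- Let q be an odd prime power, v ≥ 1, s odd, and t with qt ≡ t (mod 2^v). If a Type-I duadic splitting of Z/2^vZ given by ρ_{s,t}: i ↦ s(i+t) exists, then a Type-I duadic splitting of Z/2^vZ given by the translation τ_t: i ↦ i+t also exists. -/

import Mathlib

lemma oddIntUnit (v : ℕ) (c : ℤ) (hc : Odd c) : IsUnit (c : ZMod (2^v)) := by
  have h2 : IsCoprime c 2 := by
    rw [Int.isCoprime_iff_gcd_eq_one]
    have : ¬ (2:ℕ) ∣ c.natAbs := by
      rw [Nat.two_dvd_ne_zero, ← Nat.odd_iff]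
      exact Int.natAbs_odd.mpr hc
    simpa [Int.gcd] using (Nat.Prime.coprime_iff_not_dvd Nat.prime_two).mpr this |>.symm
  obtain ⟨a, b, hab⟩ := h2.pow_right (n := v)
  refine IsUnit.of_mul_eq_one ((a : ZMod (2^v))) ?_
  have := congrArg (fun z : ℤ => (z : ZMod (2^v))) hab
  push_cast at this
  have h0 : ((2:ZMod (2^v)))^v = 0 := by
    have := ZMod.natCast_self (2^v)
    push_cast at this
    exact this
  rw [h0] at this
  linear_combination this

lemma solv (v ν : ℕ) (d : ℤ) (hd : ¬ (2:ℤ)^(ν+1) ∣ d) (W : ZMod (2^v)) :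
    ∃ i : ZMod (2^v), (d : ZMod (2^v)) * i = 2^ν * W := by
  have hd0 : d ≠ 0 := by rintro rfl; exact hd (dvd_zero _)
  have hn0 : d.natAbs ≠ 0 := by simpa using hd0
  set β := d.natAbs.factorization 2 with hβ
  set m := d.natAbs / 2^β with hm
  have hfact : 2^β * m = d.natAbs := Nat.ordProj_mul_ordCompl_eq_self d.natAbs 2
  have hmodd : Odd m := Nat.odd_iff.mpr (Nat.two_dvd_ne_zero.mp (Nat.not_dvd_ordCompl Nat.prime_two hn0))
  -- c := sign * m
  set c : ℤ := d.sign * m with hc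
  have hmodd' : Odd (m : ℤ) := Int.odd_coe_nat m |>.mpr hmodd
  have hcodd : Odd c := by
    rcases lt_trichotomy d 0 with h | h | h
    · rw [hc, Int.sign_eq_neg_one_of_neg h]; simpa using hmodd'.neg
    · exact absurd h hd0
    · rw [hc, Int.sign_eq_one_of_pos h]; simpa using hmodd' 
  have hdc : d = 2^β * c := by
    have : (d.natAbs : ℤ) = 2^β * m := by exact_mod_cast hfact.symm
    calc d = d.sign * d.natAbs := (Int.sign_mul_natAbs d).symm
    _ = d.sign * (2^β * m) := by rw [this]
    _ = 2^β * c := by ring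
  have hβν : β ≤ ν := by
    by_contra h
    exact hd (dvd_trans (pow_dvd_pow 2 (by omega)) ⟨c, hdc⟩)
  have hCu : IsUnit ((c : ZMod (2^v))) := oddIntUnit v c hcodd
  refine ⟨2^(ν-β) * (c : ZMod (2^v))⁻¹ * W, ?_⟩
  have : ((d:ℤ) : ZMod (2^v)) = 2^β * (c : ZMod (2^v)) := by
    rw [hdc]; push_cast; ring
  rw [this]
  have h1 : ((c : ZMod (2^v))) * (c : ZMod (2^v))⁻¹ = 1 := ZMod.mul_inv_of_unit _ hCu
  have h2 : (2:ZMod (2^v))^β * 2^(ν-β) = 2^ν := by rw [← pow_add]; congr 1; omega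
  calc 2^β * (c : ZMod (2^v)) * (2^(ν-β) * (c : ZMod (2^v))⁻¹ * W)
      = (2^β * 2^(ν-β)) * ((c:ZMod (2^v)) * (c:ZMod (2^v))⁻¹) * W := by ring
    _ = 2^ν * W := by rw [h1, h2]; ring

/-- for `q` an odd prime power, `v ≥ 1`, `s` odd and `t` with
`q·t ≡ t (mod 2^v)`: if a Type-I duadic splitting of `ℤ/2^vℤ` given by
`ρ_{s,t} : i ↦ s(i+t)` exists, then one given by the translation `τ_t : i ↦ i + t`
also exists. -/
theorem stmt14 (q : ℕ) (hq : ∃ p k : ℕ, p.Prime ∧ 0 < k ∧ q = p ^ k) (hodd : Odd q)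
    (v : ℕ) (hv : 1 ≤ v) (s t : ℤ) (hs : Odd s)
    (hqt : (q : ℤ) * t ≡ t [ZMOD (2 ^ v : ℕ)])
    (hsplit : ∃ P : Finset (ZMod (2 ^ v)),
        P.image (fun i => (q : ZMod (2 ^ v)) * i) = P ∧
        P.image (fun i => (s : ZMod (2 ^ v)) * (i + (t : ZMod (2 ^ v)))) = Pᶜ) :
    ∃ P : Finset (ZMod (2 ^ v)),
        P.image (fun i => (q : ZMod (2 ^ v)) * i) = P ∧
        P.image (fun i => i + (t : ZMod (2 ^ v))) = Pᶜ := by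
  classical
  obtain ⟨P, hP1, hP2⟩ := hsplit
  have hsu : IsUnit ((s : ZMod (2^v))) := oddIntUnit v s hs
  have hqZ : Odd (q:ℤ) := Int.odd_coe_nat q |>.mpr hodd
  have hqu : IsUnit ((q : ZMod (2^v))) := by
    have := oddIntUnit v q hqZ; push_cast at this; exact this
  set T : ZMod (2^v) := (t : ZMod (2^v)) with hT
  set σ : ZMod (2^v) → ZMod (2^v) := fun i => (s:ZMod (2^v)) * (i + T) with hσ
  have hσinj : Function.Injective σ := by
    intro a b hab
    simp only [hσ] at hab
    exact add_right_cancel (hsu.mul_right_injective hab)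
  have hμinj : Function.Injective (fun i => (q:ZMod (2^v)) * i) := hqu.mul_right_injective
  have hcard : Pᶜ.card = P.card := by
    rw [← hP2]; exact Finset.card_image_of_injective P hσinj
  have hP2' : Pᶜ.image σ = P := by
    apply Finset.eq_of_subset_of_card_le
    · intro y hy
      obtain ⟨x, hx, rfl⟩ := Finset.mem_image.mp hy
      by_contra hyP
      have h1 : σ x ∈ Pᶜ := Finset.mem_compl.mpr hyP
      rw [← hP2] at h1
      obtain ⟨x', hx', he⟩ := Finset.mem_image.mp h1
      exact (Finset.mem_compl.mp hx) ((hσinj he) ▸ hx')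
    · rw [Finset.card_image_of_injective _ hσinj, hcard]
  have hP1' : Pᶜ.image (fun i => (q:ZMod (2^v)) * i) = Pᶜ := by
    apply Finset.eq_of_subset_of_card_le
    · intro y hy
      obtain ⟨x, hx, rfl⟩ := Finset.mem_image.mp hy
      by_contra hyP
      have h1 : (q:ZMod (2^v)) * x ∈ P := by
        have := Finset.notMem_compl.mp hyP; exact this
      rw [← hP1] at h1
      obtain ⟨x', hx', he⟩ := Finset.mem_image.mp h1
      exact (Finset.mem_compl.mp hx) ((hμinj he) ▸ hx')
    · rw [Finset.card_image_of_injective _ hμinj]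
  have inst1 : ∀ i : ZMod (2^v), σ i ≠ i := by
    intro i h
    by_cases hi : i ∈ P
    · have h1 : σ i ∈ Pᶜ := hP2 ▸ Finset.mem_image_of_mem σ hi
      rw [h] at h1; exact (Finset.mem_compl.mp h1) hi
    · have hi' : i ∈ Pᶜ := Finset.mem_compl.mpr hi
      have h1 : σ i ∈ P := hP2' ▸ Finset.mem_image_of_mem σ hi'
      rw [h] at h1; exact hi h1
  have inst2 : ∀ i : ZMod (2^v), σ i ≠ (q:ZMod (2^v)) * i := by
    intro i h
    by_cases hi : i ∈ P
    · have h1 : σ i ∈ Pᶜ := hP2 ▸ Finset.mem_image_of_mem σ hi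
      have h2 : (q:ZMod (2^v)) * i ∈ P :=
        hP1 ▸ Finset.mem_image_of_mem (fun i => (q:ZMod (2^v)) * i) hi
      rw [h] at h1; exact (Finset.mem_compl.mp h1) h2
    · have hi' : i ∈ Pᶜ := Finset.mem_compl.mpr hi
      have h1 : σ i ∈ P := hP2' ▸ Finset.mem_image_of_mem σ hi'
      have h2 : (q:ZMod (2^v)) * i ∈ Pᶜ :=
        hP1' ▸ Finset.mem_image_of_mem (fun i => (q:ZMod (2^v)) * i) hi'
      rw [h] at h1; exact (Finset.mem_compl.mp h2) h1
  -- T ≠ 0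
  have hT0 : T ≠ 0 := by
    intro h
    exact inst1 0 (by simp [hσ, h])
  set w := T.val with hw
  have hw0 : w ≠ 0 := by
    simpa [hw, ZMod.val_eq_zero] using hT0
  set ν := w.factorization 2 with hν
  set u := w / 2^ν with hu
  have hwfact : 2^ν * u = w := Nat.ordProj_mul_ordCompl_eq_self w 2
  have huodd : Odd u :=
    Nat.odd_iff.mpr (Nat.two_dvd_ne_zero.mp (Nat.not_dvd_ordCompl Nat.prime_two hw0))
  have hνv : ν < v := by
    have h1 : 2^ν ≤ w := Nat.le_of_dvd (Nat.pos_of_ne_zero hw0) ⟨u, hwfact.symm⟩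
    have h2 : w < 2^v := ZMod.val_lt T
    exact (Nat.pow_lt_pow_iff_right (by norm_num)).mp (lt_of_le_of_lt h1 h2)
  set U : ZMod (2^v) := ((u : ℕ) : ZMod (2^v)) with hU
  have hUu : IsUnit U := by
    have := oddIntUnit v u (Int.odd_coe_nat u |>.mpr huodd)
    push_cast at this; exact this
  have hTU : T = 2^ν * U := by
    have h1 : ((w : ℕ) : ZMod (2^v)) = T := by
      rw [hw, ZMod.natCast_val, ZMod.cast_id]
    rw [← h1, ← hwfact]; push_cast; ring
  -- claims
  have clA : (2:ℤ)^(ν+1) ∣ (1 - s) := by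
    by_contra h
    obtain ⟨i, hi⟩ := solv v ν (1-s) h ((s:ZMod (2^v)) * U)
    apply inst1 i
    show (s:ZMod (2^v)) * (i + T) = i
    push_cast at hi
    rw [hTU]
    linear_combination -hi
  have clB : (2:ℤ)^(ν+1) ∣ ((q:ℤ) - s) := by
    by_contra h
    obtain ⟨i, hi⟩ := solv v ν ((q:ℤ)-s) h ((s:ZMod (2^v)) * U)
    apply inst2 i
    show (s:ZMod (2^v)) * (i + T) = (q:ZMod (2^v)) * i
    push_cast at hi
    rw [hTU]
    linear_combination -hi
  have clQ : (2:ℤ)^(ν+1) ∣ ((q:ℤ) - 1) := by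
    have := dvd_add clB clA
    have h2 : (q:ℤ) - 1 = ((q:ℤ) - s) + (1 - s) - 2*(1-s) := by ring
    rw [h2]
    exact dvd_sub this (Dvd.dvd.mul_left clA 2)
  -- nat form: q = 2^(ν+1) * k + 1
  obtain ⟨k, hk⟩ := clQ
  have hq1 : ∃ k' : ℕ, q = 2^(ν+1) * k' + 1 := by
    have hqpos : 1 ≤ q := Nat.one_le_iff_ne_zero.mpr (by rintro rfl; simp at hodd)
    have hkpos : 0 ≤ k := by
      by_contra hneg
      push_neg at hneg
      have : (q:ℤ) - 1 < 0 := by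
        rw [hk]
        have : (0:ℤ) < 2^(ν+1) := by positivity
        nlinarith
      omega
    refine ⟨k.toNat, ?_⟩
    have : (q:ℤ) = 2^(ν+1) * k.toNat + 1 := by
      rw [Int.toNat_of_nonneg hkpos]; omega
    exact_mod_cast this
  -- bit lemmas
  have hMdvd : 2^(ν+1) ∣ 2^v := pow_dvd_pow 2 (by omega)
  have K0 : ∀ a b : ℕ, a % 2^(ν+1) = b % 2^(ν+1) → a / 2^ν % 2 = b / 2^ν % 2 := by
    intro a b h
    have ha := Nat.mod_mul_right_div_self a (2^ν) 2
    have hb := Nat.mod_mul_right_div_self b (2^ν) 2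
    rw [← ha, ← hb, show 2^ν * 2 = 2^(ν+1) from (pow_succ 2 ν).symm, h]
  set B : ZMod (2^v) → ℕ := fun x => x.val / 2^ν % 2 with hB
  obtain ⟨k', hk'⟩ := hq1
  have hqM : q % 2^(ν+1) = 1 % 2^(ν+1) := by rw [hk', Nat.mul_add_mod]
  have K1 : ∀ x : ZMod (2^v), B ((q:ZMod (2^v)) * x) = B x := by
    intro x
    apply K0
    have h1 : ((q:ZMod (2^v)) * x).val = (q % 2^v) * x.val % 2^v := by
      rw [ZMod.val_mul, ZMod.val_natCast]
    rw [h1]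
    calc (q % 2^v) * x.val % 2^v % 2^(ν+1)
        = (q % 2^v) * x.val % 2^(ν+1) := Nat.mod_mod_of_dvd _ hMdvd
      _ = q * x.val % 2^(ν+1) := Nat.ModEq.mul_right _ (Nat.mod_mod_of_dvd q hMdvd)
      _ = 1 * x.val % 2^(ν+1) := Nat.ModEq.mul_right _ hqM
      _ = x.val % 2^(ν+1) := by rw [one_mul]
  have K2 : ∀ x : ZMod (2^v), B (x + ((2^ν : ℕ) : ZMod (2^v))) = (x.val / 2^ν + 1) % 2 := by
    intro x
    have he : (((2^ν : ℕ) : ZMod (2^v))).val = 2^ν := by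
      rw [ZMod.val_natCast, Nat.mod_eq_of_lt (Nat.pow_lt_pow_right (by norm_num) hνv)]
    show (x + _).val / 2^ν % 2 = _
    rw [ZMod.val_add, he]
    have h2 : (x.val + 2^ν) % 2^v / 2^ν % 2 = (x.val + 2^ν) / 2^ν % 2 :=
      K0 _ _ (Nat.mod_mod_of_dvd _ hMdvd)
    rw [h2, Nat.add_div_right _ (pow_pos two_pos ν)]
  -- the predicate and the set
  set pr : ZMod (2^v) → Prop := fun i => B (U⁻¹ * i) = 0 with hpr
  have hUinv : U * U⁻¹ = 1 := ZMod.mul_inv_of_unit _ hUu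
  have hUT : U⁻¹ * T = ((2^ν : ℕ) : ZMod (2^v)) := by
    rw [hTU]; push_cast
    linear_combination ((2:ZMod (2^v))^ν) * hUinv
  refine ⟨Finset.univ.filter pr, ?_, ?_⟩
  · ext y
    simp only [Finset.mem_image, Finset.mem_filter, Finset.mem_univ, true_and]
    have hiff : ∀ x : ZMod (2^v), pr ((q:ZMod (2^v)) * x) ↔ pr x := by
      intro x
      show B (U⁻¹ * ((q:ZMod (2^v)) * x)) = 0 ↔ B (U⁻¹ * x) = 0
      rw [show U⁻¹ * ((q:ZMod (2^v)) * x) = (q:ZMod (2^v)) * (U⁻¹ * x) by ring, K1]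
    constructor
    · rintro ⟨x, hx, rfl⟩; exact (hiff x).mpr hx
    · intro hy
      have hqq : (q:ZMod (2^v)) * ((q:ZMod (2^v))⁻¹ * y) = y := by
        rw [show (q:ZMod (2^v)) * ((q:ZMod (2^v))⁻¹ * y)
              = ((q:ZMod (2^v)) * (q:ZMod (2^v))⁻¹) * y by ring,
           ZMod.mul_inv_of_unit _ hqu, one_mul]
      exact ⟨(q:ZMod (2^v))⁻¹ * y, (hiff _).mp (by rw [hqq]; exact hy), hqq⟩
  · ext y
    simp only [Finset.mem_image, Finset.mem_filter, Finset.mem_univ, true_and,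
      Finset.mem_compl, not_and]
    have hflip : ∀ x : ZMod (2^v), B (U⁻¹ * (x + T)) = (B (U⁻¹ * x) + 1) % 2 := by
      intro x
      rw [mul_add, hUT, K2]
      have h3 : B (U⁻¹ * x) = (U⁻¹ * x).val / 2^ν % 2 := rfl
      omega
    constructor
    · rintro ⟨x, hx, rfl⟩
      intro hcon
      have hx' : B (U⁻¹ * x) = 0 := hx
      have hcon' : B (U⁻¹ * (x + T)) = 0 := hcon
      rw [hflip x, hx'] at hcon'
      simp at hcon'
    · intro hy
      refine ⟨y - T, ?_, by ring⟩
      show B (U⁻¹ * (y - T)) = 0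
      have h1 := hflip (y - T)
      rw [show y - T + T = y by ring] at h1
      have hy' : ¬ (B (U⁻¹ * y) = 0) := hy
      have h2 : B (U⁻¹ * y) < 2 := Nat.mod_lt _ (by norm_num)
      have h3 : B (U⁻¹ * (y - T)) < 2 := Nat.mod_lt _ (by norm_num)
      omega
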